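/- Let V be a complex Banach space, Δ : V → V a continuous ℂ-linear map, s₀ ∈ ℂ, r > 0, and N ≥ 1 an integer. Let (aₙ)_{n ≥ −N} be vectors in V such that E(s) = Σ_{n ≥ −N} aₙ (s − s₀)ⁿ converges in V for 0 < |s − s₀| < r, let λ be analytic on |s − s₀| < r, and suppose Δ(E(s)) = λ(s) • E(s) for 0 < |s − s₀| < r. Then for every integer n with 1 ≤ n ≤ N, the negative Laurent coefficient a₋ₙ satisfies (Δ − λ(s₀))^{N−n+1}(a₋ₙ) = 0, i.e., applying the map v ↦ Δv − λ(s₀)v exactly (N−n+1) times to a₋ₙ yields zero. -/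

import Mathlib

open Filter Topology

private noncomputable def ser {V : Type*} [NormedAddCommGroup V] [NormedSpace ℂ V] (v : ℕ → V) :
    FormalMultilinearSeries ℂ ℂ V := fun m => ContinuousMultilinearMap.mkPiRing ℂ (Fin m) (v m)

private lemma ser_coeff {V : Type*} [NormedAddCommGroup V] [NormedSpace ℂ V] (v : ℕ → V)
    (m : ℕ) : (ser v).coeff m = v m := by
  simp [ser, FormalMultilinearSeries.coeff]

private theorem aux_gen {V : Type*} [NormedAddCommGroup V] [NormedSpace ℂ V] [CompleteSpace V]
    (T : V →L[ℂ] V) (s₀ : ℂ) (r : ℝ) (hr : 0 < r) (N : ℕ)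
    (a : ℤ → V) (ha : ∀ n : ℤ, n < -(N : ℤ) → a n = 0)
    (E : ℂ → V) (μ : ℂ → ℂ) (hμ : AnalyticAt ℂ μ s₀)
    (hE : ∀ s : ℂ, s ≠ s₀ → ‖s - s₀‖ < r →
      HasSum (fun n : ℤ => (s - s₀) ^ n • a n) (E s))
    (hTE : ∀ s : ℂ, s ≠ s₀ → ‖s - s₀‖ < r →
      T (E s) = ((s - s₀) * μ s) • E s) :
    ∀ k m : ℕ, m < k → (T ^ k) (a ((m : ℤ) - N)) = 0 := by
  -- Step 1: the shifted (by N) series sums to (s-s₀)^N • E s on the punctured ball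
  have hA : ∀ z : ℂ, z ≠ 0 → ‖z‖ < r →
      HasSum (fun m : ℕ => z ^ m • a ((m : ℤ) - N)) (z ^ N • E (s₀ + z)) := by
    intro z hz0 hzr
    have hne : s₀ + z ≠ s₀ := by simpa using hz0
    have key := hE (s₀ + z) hne (by simpa using hzr)
    rw [add_sub_cancel_left] at key
    have hinj : Function.Injective (fun m : ℕ => (m : ℤ) - N) := by
      intro x y h
      have h' : (x : ℤ) - N = (y : ℤ) - N := h
      omega
    have h1 : HasSum ((fun n : ℤ => z ^ n • a n) ∘ fun m : ℕ => ((m : ℤ) - N))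
        (E (s₀ + z)) := by
      refine (Function.Injective.hasSum_iff hinj ?_).mpr key
      intro n hn
      have hlt : n < -(N : ℤ) := by
        by_contra h
        push_neg at h
        exact hn ⟨(n + N).toNat, by show ((n + N).toNat : ℤ) - N = n; omega⟩
      simp [ha n hlt]
    have h2 := h1.const_smul (z ^ N)
    have e : ∀ m : ℕ, z ^ N • ((fun n : ℤ => z ^ n • a n) ∘ fun m : ℕ => ((m : ℤ) - N)) m
        = z ^ m • a ((m : ℤ) - N) := by
      intro m
      show z ^ N • z ^ ((m : ℤ) - N) • a ((m : ℤ) - N) = z ^ m • a ((m : ℤ) - N)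
      rw [smul_smul, ← zpow_natCast z N, ← zpow_add₀ hz0]
      have : (N : ℤ) + ((m : ℤ) - N) = (m : ℤ) := by ring
      rw [this, zpow_natCast]
    exact HasSum.congr_fun h2 fun m => (e m).symm
  set F : ℂ → V := fun s => ∑' m : ℕ, (s - s₀) ^ m • a ((m : ℤ) - N) with hFdef
  have hAll : ∀ z : ℂ, ‖z‖ < r →
      HasSum (fun m : ℕ => z ^ m • a ((m : ℤ) - N)) (F (s₀ + z)) := by
    intro z hz
    have hs : Summable fun m : ℕ => z ^ m • a ((m : ℤ) - N) := by
      rcases eq_or_ne z 0 with rfl | hz0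
      · exact (HasSum.hasSum_at_zero fun m : ℕ => a ((m : ℤ) - N)).summable
      · exact (hA z hz0 hz).summable
    have := hs.hasSum
    simpa [hFdef, add_sub_cancel_left] using this
  have hballz : ∀ᶠ z : ℂ in 𝓝 0, ‖z‖ < r := by
    filter_upwards [Metric.ball_mem_nhds (0 : ℂ) hr] with z hz
    simpa [Complex.dist_eq] using (Metric.mem_ball.mp hz)
  have hF : HasFPowerSeriesAt F (ser fun m => a ((m : ℤ) - N)) s₀ := by
    rw [hasFPowerSeriesAt_iff]
    filter_upwards [hballz] with z hz
    simpa only [ser_coeff] using hAll z hz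
  have hFan : AnalyticAt ℂ F s₀ := ⟨_, hF⟩
  have Fval : ∀ s : ℂ, s ≠ s₀ → ‖s - s₀‖ < r → F s = (s - s₀) ^ N • E s := by
    intro s hs hsr
    have h1 := hAll (s - s₀) hsr
    have h2 := hA (s - s₀) (sub_ne_zero.mpr hs) hsr
    have hss : s₀ + (s - s₀) = s := by ring
    rw [hss] at h1 h2
    exact h1.unique h2
  have hTkE : ∀ k : ℕ, ∀ s : ℂ, s ≠ s₀ → ‖s - s₀‖ < r →
      (T ^ k) (E s) = ((s - s₀) * μ s) ^ k • E s := by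
    intro k
    induction k with
    | zero => intro s hs hsr; simp
    | succ k ih =>
      intro s hs hsr
      rw [pow_succ, ContinuousLinearMap.mul_apply, hTE s hs hsr, map_smul, ih s hs hsr,
        smul_smul, ← pow_succ']
  intro k m hmk
  have hk0 : 0 < k := Nat.lt_of_le_of_lt (Nat.zero_le m) hmk
  set ψ : ℂ → V := fun s => μ s ^ k • F s with hψdef
  have hψ : AnalyticAt ℂ ψ s₀ := (hμ.pow k).smul hFan
  obtain ⟨S, hS⟩ := id hψ
  set w : ℕ → V := fun m => if m < k then 0 else S.coeff (m - k) with hwdef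
  have hkey : ∀ s : ℂ, s ≠ s₀ → ‖s - s₀‖ < r →
      (T ^ k) (F s) = (s - s₀) ^ k • ψ s := by
    intro s hs hsr
    have h1 : (T ^ k) (F s) = (s - s₀) ^ N • ((s - s₀) * μ s) ^ k • E s := by
      rw [Fval s hs hsr, map_smul, hTkE k s hs hsr]
    have h2 : (s - s₀) ^ k • ψ s = (s - s₀) ^ k • μ s ^ k • (s - s₀) ^ N • E s := by
      rw [hψdef]
      simp only
      rw [Fval s hs hsr]
    rw [h1, h2, smul_smul, smul_smul, smul_smul, mul_pow]
    congr 1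
    ring
  -- limit at the center
  have hlim : (T ^ k) (F s₀) = 0 := by
    have hc : ContinuousAt (fun s => (T ^ k) (F s)) s₀ :=
      ((T ^ k).continuous.continuousAt).comp hFan.continuousAt
    have h1 : Tendsto (fun s => (T ^ k) (F s)) (𝓝[≠] s₀) (𝓝 ((T ^ k) (F s₀))) :=
      hc.tendsto.mono_left nhdsWithin_le_nhds
    have hc2 : ContinuousAt (fun s => (s - s₀) ^ k • ψ s) s₀ :=
      ((continuousAt_id.sub continuousAt_const).pow k).smul hψ.continuousAt
    have h3 : Tendsto (fun s => (s - s₀) ^ k • ψ s) (𝓝[≠] s₀) (𝓝 0) := by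
      have := hc2.tendsto.mono_left (nhdsWithin_le_nhds (s := {s₀}ᶜ))
      simpa [zero_pow hk0.ne'] using this
    have heq' : ∀ᶠ s in 𝓝[≠] s₀, (T ^ k) (F s) = (s - s₀) ^ k • ψ s := by
      have hball : ∀ᶠ s in 𝓝 s₀, ‖s - s₀‖ < r := by
        filter_upwards [Metric.ball_mem_nhds s₀ hr] with s hs
        simpa [Complex.dist_eq] using (Metric.mem_ball.mp hs)
      filter_upwards [hball.filter_mono nhdsWithin_le_nhds, self_mem_nhdsWithin] with s h1 h2
      exact hkey s h2 h1
    have h2 : Tendsto (fun s => (T ^ k) (F s)) (𝓝[≠] s₀) (𝓝 0) := Filter.Tendsto.congr' (heq'.mono fun s hs => hs.symm) h3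
    exact tendsto_nhds_unique h1 h2
  have hTF : HasFPowerSeriesAt (fun s => (T ^ k) (F s))
      (ser fun m => (T ^ k) (a ((m : ℤ) - N))) s₀ := by
    rw [hasFPowerSeriesAt_iff]
    filter_upwards [hballz] with z hz
    have := (T ^ k).hasSum (hAll z hz)
    simpa only [ser_coeff, map_smul] using this
  have hgw : HasFPowerSeriesAt (fun s => (T ^ k) (F s)) (ser w) s₀ := by
    rw [hasFPowerSeriesAt_iff]
    have hev := hasFPowerSeriesAt_iff.mp hS
    filter_upwards [hev, hballz] with z hz1 hz2
    simp only [ser_coeff]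
    rcases eq_or_ne z 0 with rfl | hz0
    · have h0 := HasSum.hasSum_at_zero (𝕜 := ℂ) w
      have hw0 : w 0 = 0 := by simp [hwdef, hk0]
      rw [hw0] at h0
      simpa [hlim] using h0
    · have hne : s₀ + z ≠ s₀ := by simpa using hz0
      have hv : (T ^ k) (F (s₀ + z)) = z ^ k • ψ (s₀ + z) := by
        have := hkey (s₀ + z) hne (by simpa using hz2)
        simpa [add_sub_cancel_left] using this
      rw [hv]
      have h4 := hz1.const_smul (z ^ k)
      have hfi : ∀ m : ℕ, z ^ (m + k) • w (m + k) = z ^ k • z ^ m • S.coeff m := by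
        intro m
        have hnk : ¬(m + k < k) := by omega
        rw [hwdef]
        simp only [hnk, if_false, Nat.add_sub_cancel, smul_smul, pow_add]
        rw [mul_comm]
      have h5 : HasSum (fun m : ℕ => z ^ (m + k) • w (m + k)) (z ^ k • ψ (s₀ + z)) := by
        simpa [hfi] using h4
      have hzero : ∀ x ∉ Set.range (fun m : ℕ => m + k), z ^ x • w x = 0 := by
        intro x hx
        have hxk : x < k := by
          by_contra h
          exact hx ⟨x - k, by show x - k + k = x; omega⟩
        simp [hwdef, hxk]
      exact ((add_left_injective k).hasSum_iff hzero).mp h5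
  have heqser := hTF.eq_formalMultilinearSeries hgw
  have hm := congrArg (fun p : FormalMultilinearSeries ℂ ℂ V => p.coeff m) heqser
  simpa [ser_coeff, hwdef, hmk] using hm

/-- At a pole of order at most `N` of an eigenfunction family `E(s) = Σ_{n ≥ -N} aₙ (s-s₀)ⁿ`,
every negative Laurent coefficient `a₋ₙ` (for `1 ≤ n ≤ N`) is a generalized eigenvector:
`(Δ − λ(s₀))^{N-n+1}(a₋ₙ) = 0`. -/
theorem negative_laurent_coefficients_are_generalized_eigenvectors
    {V : Type*} [NormedAddCommGroup V] [NormedSpace ℂ V] [CompleteSpace V]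
    (Δ : V →L[ℂ] V) (s₀ : ℂ) (r : ℝ) (hr : 0 < r) (N : ℕ) (hN : 1 ≤ N)
    (a : ℤ → V) (ha : ∀ n : ℤ, n < -(N : ℤ) → a n = 0)
    (E : ℂ → V) (lam : ℂ → ℂ)
    (hE : ∀ s : ℂ, s ≠ s₀ → ‖s - s₀‖ < r →
      HasSum (fun n : ℤ => (s - s₀) ^ n • a n) (E s))
    (hlam : ∀ s ∈ Metric.ball s₀ r, AnalyticAt ℂ lam s)
    (heq : ∀ s : ℂ, s ≠ s₀ → ‖s - s₀‖ < r → Δ (E s) = lam s • E s) :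
    ∀ n : ℕ, 1 ≤ n → n ≤ N →
      (fun v => Δ v - lam s₀ • v)^[N - n + 1] (a (-(n : ℤ))) = 0 := by
  intro n h1 hn
  set T : V →L[ℂ] V := Δ - lam s₀ • ContinuousLinearMap.id ℂ V with hT
  have hTapp : ∀ v : V, T v = Δ v - lam s₀ • v := by
    intro v; simp [hT]
  have hiter : ∀ (k : ℕ) (v : V), (fun v => Δ v - lam s₀ • v)^[k] v = (T ^ k) v := by
    intro k
    induction k with
    | zero => intro v; simp
    | succ k ih =>
      intro v
      rw [Function.iterate_succ_apply', ih, pow_succ', ContinuousLinearMap.mul_apply]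
      exact (hTapp _).symm
  obtain ⟨p, hp⟩ := hlam s₀ (Metric.mem_ball_self hr)
  have hμ : AnalyticAt ℂ (dslope lam s₀) s₀ := ⟨_, hp.has_fpower_series_dslope_fslope⟩
  have hTE : ∀ s : ℂ, s ≠ s₀ → ‖s - s₀‖ < r →
      T (E s) = ((s - s₀) * dslope lam s₀ s) • E s := by
    intro s hs hsr
    have hd : (s - s₀) * dslope lam s₀ s = lam s - lam s₀ := by
      have := sub_smul_dslope lam s₀ s
      simpa [smul_eq_mul] using this
    rw [hTapp, heq s hs hsr, hd, sub_smul]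
  have key := aux_gen T s₀ r hr N a ha E (dslope lam s₀) hμ hE hTE (N - n + 1) (N - n)
    (by omega)
  have hcast : ((N - n : ℕ) : ℤ) - (N : ℤ) = -(n : ℤ) := by omega
  rw [hcast] at key
  rw [hiter]
  exact key
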